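/- (Instrumental variable detects incompleteness) Let 𝒜 = {a₀,a₁}, Z a random variable with support 𝒵, and for each z let p_{0|z} = P(y = a₀ | Z = z), p_{1|z} = P(y = a₁ | Z = z) with p_{0|z} + p_{1|z} = 1. Suppose M is independent of Z (i.e., P(M = S | Z = z) = P(M = S) for all nonempty S and all z) and y ∈ M given Z = z a.s. for each z. If Δ₀ := sup_z p_{0|z} − inf_z p_{0|z} > 0, then θ_{01} := P(M = {a₀, a₁}) ≥ Δ₀ > 0. -/

import Mathlib

open MeasureTheory

/-- an instrumental variable detects incompleteness:
if `Δ₀ = sup_z p_{0|z} − inf_z p_{0|z} > 0` then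
`θ_{01} = P(M = {a₀,a₁}) ≥ Δ₀ > 0`. -/
theorem iv_detects_incompleteness {Ω α 𝒵 : Type*} [MeasurableSpace Ω]
    [Nonempty 𝒵] [DecidableEq α] (a₀ a₁ : α) (hne : a₀ ≠ a₁)
    (μ : Measure Ω) [IsProbabilityMeasure μ]
    (P : 𝒵 → Measure Ω) (hP : ∀ z, IsProbabilityMeasure (P z))
    (M : Ω → Finset α) (y : Ω → α)
    (hMsub : ∀ ω, M ω ⊆ {a₀, a₁}) (hMne : ∀ ω, (M ω).Nonempty)
    (hMmeas : ∀ A : Finset α, MeasurableSet {ω | M ω = A})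
    (hymeas : ∀ a : α, MeasurableSet {ω | y ω = a})
    (hsel : ∀ z, ∀ᵐ ω ∂(P z), y ω ∈ M ω)
    (hindep : ∀ z (S : Finset α), P z {ω | M ω = S} = μ {ω | M ω = S})
    (hsum : ∀ z, ((P z) {ω | y ω = a₀}).toReal + ((P z) {ω | y ω = a₁}).toReal = 1)
    (hΔ : 0 < (⨆ z, ((P z) {ω | y ω = a₀}).toReal)
            - ⨅ z, ((P z) {ω | y ω = a₀}).toReal) :
    (⨆ z, ((P z) {ω | y ω = a₀}).toReal)
        - (⨅ z, ((P z) {ω | y ω = a₀}).toReal)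
      ≤ (μ {ω | M ω = {a₀, a₁}}).toReal ∧
    0 < (μ {ω | M ω = {a₀, a₁}}).toReal := by
  set θ₀ : ℝ := (μ {ω | M ω = {a₀}}).toReal with hθ₀
  set θ01 : ℝ := (μ {ω | M ω = ({a₀, a₁} : Finset α)}).toReal with hθ01
  have hfin : ∀ z (s : Set Ω), P z s ≠ ⊤ := fun z s => measure_ne_top (P z) s
  have hμfin : ∀ s : Set Ω, μ s ≠ ⊤ := fun s => measure_ne_top μ s
  -- lower bound: θ₀ ≤ p_{0|z}
  have hlow : ∀ z, θ₀ ≤ ((P z) {ω | y ω = a₀}).toReal := by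
    intro z
    have hsub : ({ω | M ω = ({a₀} : Finset α)} : Set Ω) ≤ᵐ[P z] ({ω | y ω = a₀} : Set Ω) := by
      filter_upwards [hsel z] with ω hy hM
      have hM' : M ω = {a₀} := hM
      rw [hM'] at hy
      exact (show y ω = a₀ by simpa using hy)
    have := measure_mono_ae hsub
    rw [hindep z {a₀}] at this
    exact ENNReal.toReal_mono (hfin z _) this
  -- upper bound: p_{0|z} ≤ θ₀ + θ01
  have hup : ∀ z, ((P z) {ω | y ω = a₀}).toReal ≤ θ₀ + θ01 := by
    intro z
    have hsub : ({ω | y ω = a₀} : Set Ω) ≤ᵐ[P z]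
        (({ω | M ω = ({a₀} : Finset α)} ∪ {ω | M ω = ({a₀, a₁} : Finset α)} : Set Ω)) := by
      filter_upwards [hsel z] with ω hy hy0
      have hy0' : y ω = a₀ := hy0
      rw [hy0'] at hy
      by_cases h1 : a₁ ∈ M ω
      · right
        show M ω = {a₀, a₁}
        apply Finset.Subset.antisymm (hMsub ω)
        intro x hx
        simp only [Finset.mem_insert, Finset.mem_singleton] at hx
        rcases hx with rfl | rfl
        · exact hy
        · exact h1
      · left
        show M ω = {a₀}
        apply Finset.Subset.antisymm
        · intro x hx
          have := hMsub ω hx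
          simp only [Finset.mem_insert, Finset.mem_singleton] at this ⊢
          rcases this with rfl | rfl
          · rfl
          · exact absurd hx h1
        · intro x hx
          simp only [Finset.mem_singleton] at hx
          subst hx; exact hy
    have h1 := measure_mono_ae hsub
    have h2 : (P z) ({ω | M ω = ({a₀} : Finset α)} ∪ {ω | M ω = ({a₀, a₁} : Finset α)})
        ≤ (P z) {ω | M ω = ({a₀} : Finset α)} + (P z) {ω | M ω = ({a₀, a₁} : Finset α)} :=
      measure_union_le _ _
    have h3 := le_trans h1 h2
    rw [hindep z {a₀}, hindep z {a₀, a₁}] at h3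
    calc ((P z) {ω | y ω = a₀}).toReal
        ≤ ((μ {ω | M ω = ({a₀} : Finset α)}) + (μ {ω | M ω = ({a₀, a₁} : Finset α)})).toReal :=
          ENNReal.toReal_mono (ENNReal.add_ne_top.2 ⟨hμfin _, hμfin _⟩) h3
      _ = θ₀ + θ01 := ENNReal.toReal_add (hμfin _) (hμfin _)
  have hsup : (⨆ z, ((P z) {ω | y ω = a₀}).toReal) ≤ θ₀ + θ01 :=
    Real.iSup_le hup (by positivity)
  have hinf : θ₀ ≤ ⨅ z, ((P z) {ω | y ω = a₀}).toReal :=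
    le_ciInf hlow
  constructor
  · linarith
  · linarith
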